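/- For elements γ, δ of I∞↗(ℕ) the following conditions are equivalent: (i) there exists an idempotent ε of I∞↗(ℕ) with γ * ε = δ * ε; (ii) there exists an idempotent ε of I∞↗(ℕ) with ε * γ = ε * δ; (iii) there exists an idempotent ε of the subsemigroup C = C_ℕ(α,β) with ε * γ = ε * δ; (iv) there exists an idempotent ε of C with γ * ε = δ * ε; (v) there is a positive integer i such that the restrictions of the partial maps γ and δ to {i, i+1, i+2, …} coincide. -/

import Mathlib

open Set

/-- Cofinite monotone partial bijections of `ℕ`. -/
def IsCMPB (e : PartialEquiv ℕ ℕ) : Prop :=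
  e.sourceᶜ.Finite ∧ e.targetᶜ.Finite ∧
    ∀ ⦃m n : ℕ⦄, m ∈ e.source → n ∈ e.source → m < n → e m < e n

lemma IsCMPB.symm {e : PartialEquiv ℕ ℕ} (he : IsCMPB e) : IsCMPB e.symm := by
  obtain ⟨h1, h2, h3⟩ := he
  refine ⟨by simpa using h2, by simpa using h1, ?_⟩
  intro m n hm hn hmn
  have hm' : e.symm m ∈ e.source := e.map_target (by simpa using hm)
  have hn' : e.symm n ∈ e.source := e.map_target (by simpa using hn)
  have hEm : e (e.symm m) = m := e.right_inv hm
  have hEn : e (e.symm n) = n := e.right_inv hn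
  rcases lt_trichotomy (e.symm m) (e.symm n) with h | h | h
  · exact h
  · exfalso
    have : m = n := by rw [← hEm, ← hEn, h]
    omega
  · exfalso
    have := h3 hn' hm' h
    rw [hEm, hEn] at this
    omega

private lemma trans_source_compl_finite {e f : PartialEquiv ℕ ℕ}
    (he : e.sourceᶜ.Finite) (hf : f.sourceᶜ.Finite) : ((e.trans f).source)ᶜ.Finite := by
  rw [PartialEquiv.trans_source]
  have hT : (e.source ∩ e ⁻¹' f.sourceᶜ).Finite := by
    apply Set.Finite.of_finite_image ?_ (e.injOn.mono inter_subset_left)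
    apply hf.subset
    rintro _ ⟨x, ⟨_, hx2⟩, rfl⟩
    exact hx2
  apply (he.union hT).subset
  intro x hx
  simp only [mem_compl_iff, mem_inter_iff, not_and_or] at hx
  by_cases h : x ∈ e.source
  · rcases hx with h' | h'
    · exact absurd h h'
    · exact Or.inr ⟨h, h'⟩
  · exact Or.inl h

lemma IsCMPB.trans {e f : PartialEquiv ℕ ℕ} (he : IsCMPB e) (hf : IsCMPB f) :
    IsCMPB (e.trans f) := by
  refine ⟨trans_source_compl_finite he.1 hf.1, ?_, ?_⟩
  · have h : (((e.trans f).symm).source)ᶜ.Finite := by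
      rw [PartialEquiv.trans_symm_eq_symm_trans_symm]
      exact trans_source_compl_finite (by simpa using hf.2.1) (by simpa using he.2.1)
    simpa using h
  · intro m n hm hn hmn
    rw [PartialEquiv.trans_source] at hm hn
    show f (e m) < f (e n)
    exact hf.2.2 hm.2 hn.2 (he.2.2 hm.1 hn.1 hmn)

lemma isCMPB_congr {e e' : PartialEquiv ℕ ℕ} (h : e ≈ e') : IsCMPB e ↔ IsCMPB e' := by
  constructor <;> intro ⟨h1, h2, h3⟩
  · refine ⟨(PartialEquiv.EqOnSource.source_eq h) ▸ h1, (PartialEquiv.EqOnSource.target_eq h) ▸ h2, ?_⟩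
    intro m n hm hn hmn
    rw [← (PartialEquiv.EqOnSource.source_eq h)] at hm hn
    rw [← (PartialEquiv.EqOnSource.eqOn h) hm, ← (PartialEquiv.EqOnSource.eqOn h) hn]
    exact h3 hm hn hmn
  · refine ⟨(PartialEquiv.EqOnSource.source_eq h) ▸ h1, (PartialEquiv.EqOnSource.target_eq h) ▸ h2, ?_⟩
    intro m n hm hn hmn
    rw [(PartialEquiv.EqOnSource.eqOn h) hm, (PartialEquiv.EqOnSource.eqOn h) hn]
    exact h3 ((PartialEquiv.EqOnSource.source_eq h) ▸ hm) ((PartialEquiv.EqOnSource.source_eq h) ▸ hn) hmn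

/-- The type of partial bijections of `ℕ` up to equality on the source. -/
abbrev PEQ : Type := Quotient (PartialEquiv.eqOnSourceSetoid (α := ℕ) (β := ℕ))

instance : Mul PEQ :=
  ⟨Quotient.map₂ PartialEquiv.trans fun _ _ h _ _ h' => PartialEquiv.EqOnSource.trans' h h'⟩

lemma PEQ.mk_mul (e f : PartialEquiv ℕ ℕ) : (⟦e⟧ * ⟦f⟧ : PEQ) = ⟦e.trans f⟧ := rfl

instance : Semigroup PEQ where
  mul_assoc a b c := by
    induction a using Quotient.inductionOn with | h a =>
    induction b using Quotient.inductionOn with | h b =>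
    induction c using Quotient.inductionOn with | h c =>
    simp only [PEQ.mk_mul, PartialEquiv.trans_assoc]

/-- The property of being a cofinite monotone partial bijection, on `PEQ`. -/
def PEQ.IsGood : PEQ → Prop :=
  Quotient.lift IsCMPB fun _ _ h => propext (isCMPB_congr h)

lemma PEQ.IsGood.mul {a b : PEQ} (ha : a.IsGood) (hb : b.IsGood) : (a * b).IsGood := by
  induction a using Quotient.inductionOn with | h a =>
  induction b using Quotient.inductionOn with | h b =>
  exact IsCMPB.trans ha hb

/-- The semigroup `I∞↗(ℕ)` of cofinite monotone partial bijections of `ℕ`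
(partial bijections being identified when they have the same source and coincide there). -/
def Imon : Type := {q : PEQ // q.IsGood}

instance : Mul Imon := ⟨fun a b => ⟨a.1 * b.1, a.2.mul b.2⟩⟩

instance : Semigroup Imon where
  mul_assoc a b c := Subtype.ext (mul_assoc a.1 b.1 c.1)

/-- The underlying symmetrization (inverse partial bijection), on `PEQ`. -/
def PEQ.symm : PEQ → PEQ := Quotient.map PartialEquiv.symm fun _ _ h => PartialEquiv.EqOnSource.symm' h

lemma PEQ.IsGood.symm {a : PEQ} (ha : a.IsGood) : a.symm.IsGood := by
  induction a using Quotient.inductionOn with | h a =>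
  exact IsCMPB.symm ha

/-- The inverse in the inverse semigroup `I∞↗(ℕ)`. -/
instance : Inv Imon := ⟨fun a => ⟨a.1.symm, a.2.symm⟩⟩

/-- The source (domain) of an element of `PEQ`. -/
def PEQ.source : PEQ → Set ℕ :=
  Quotient.lift (fun e => e.source) fun _ _ h => (PartialEquiv.EqOnSource.source_eq h)

/-- The target (range) of an element of `PEQ`. -/
def PEQ.target : PEQ → Set ℕ :=
  Quotient.lift (fun e => e.target) fun _ _ h => (PartialEquiv.EqOnSource.target_eq h)

/-- The source (domain) of a cofinite monotone partial bijection of `ℕ`. -/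
def Imon.source (a : Imon) : Set ℕ := a.1.source

/-- The target (range) of a cofinite monotone partial bijection of `ℕ`. -/
def Imon.target (a : Imon) : Set ℕ := a.1.target

/-- The graph of an element of `PEQ`: pairs `(x, y)` with `x` in the source mapped to `y`. -/
def PEQ.graph : PEQ → Set (ℕ × ℕ) :=
  Quotient.lift (fun e => {p : ℕ × ℕ | p.1 ∈ e.source ∧ e p.1 = p.2}) fun e e' h => by
    ext p
    simp only [mem_setOf_eq]
    constructor
    · rintro ⟨h1, h2⟩
      exact ⟨(PartialEquiv.EqOnSource.source_eq h) ▸ h1, by rw [← (PartialEquiv.EqOnSource.eqOn h) h1]; exact h2⟩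
    · rintro ⟨h1, h2⟩
      refine ⟨(PartialEquiv.EqOnSource.source_eq h) ▸ h1, ?_⟩
      rw [(PartialEquiv.EqOnSource.eqOn h) ((PartialEquiv.EqOnSource.source_eq h) ▸ h1 : p.1 ∈ e.source)]
      exact h2

/-- The graph of a cofinite monotone partial bijection of `ℕ`. -/
def Imon.graph (a : Imon) : Set (ℕ × ℕ) := a.1.graph

/-- The natural partial order on idempotents: `ε ≤ ι` iff `ε * ι = ι * ε = ε`. -/
def idemLE (ε ι : Imon) : Prop := ε * ι = ε ∧ ι * ε = ε

/-- The everywhere-defined partial bijection `n ↦ n + 1`. -/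
def alphaPE : PartialEquiv ℕ ℕ where
  toFun n := n + 1
  invFun n := n - 1
  source := Set.univ
  target := {n : ℕ | 1 ≤ n}
  map_source' n _ := Nat.le_add_left 1 n
  map_target' _ _ := trivial
  left_inv' n _ := by show n + 1 - 1 = n; omega
  right_inv' n hn := by
    simp only [Set.mem_setOf_eq] at hn
    show n - 1 + 1 = n
    omega

lemma alphaPE_good : IsCMPB alphaPE := by
  refine ⟨by simp [alphaPE], ?_, ?_⟩
  · apply (Set.finite_singleton 0).subset
    intro n hn
    simp only [alphaPE, mem_compl_iff, mem_setOf_eq, not_le] at hn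
    simp only [mem_singleton_iff]
    omega
  · intro m n _ _ h
    show m + 1 < n + 1
    omega

/-- The generator `α : n ↦ n + 1` of the bicyclic subsemigroup. -/
def aGen : Imon := ⟨⟦alphaPE⟧, alphaPE_good⟩

/-- The generator `β : n ↦ n - 1` (with source `{n | 1 ≤ n}`) of the bicyclic subsemigroup. -/
def bGen : Imon := aGen⁻¹

/-- The bicyclic subsemigroup `C_ℕ(α, β)` of `I∞↗(ℕ)`, generated by `α` and `β`. -/
def Cbic : Subsemigroup Imon := Subsemigroup.closure {aGen, bGen}



section AuxLGC

private def Imon.mk (e : PartialEquiv ℕ ℕ) (he : IsCMPB e) : Imon := ⟨⟦e⟧, he⟩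

private lemma Imon.indOn {motive : Imon → Prop}
    (h : ∀ (e : PartialEquiv ℕ ℕ) (he : IsCMPB e), motive (Imon.mk e he)) : ∀ a, motive a := by
  rintro ⟨q, hq⟩
  revert hq
  induction q using Quotient.inductionOn with
  | h e => exact fun hq => h e hq

private lemma mk_mul_mk (e f : PartialEquiv ℕ ℕ) (he : IsCMPB e) (hf : IsCMPB f) :
    (Imon.mk e he) * (Imon.mk f hf) = Imon.mk (e.trans f) (he.trans hf) := rfl

private lemma mk_eq_mk {e f : PartialEquiv ℕ ℕ} {he : IsCMPB e} {hf : IsCMPB f} :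
    Imon.mk e he = Imon.mk f hf ↔ e ≈ f := by
  refine Subtype.mk_eq_mk.trans ?_
  exact Quotient.eq

private lemma mem_graph_mk {e : PartialEquiv ℕ ℕ} {he : IsCMPB e} (j k : ℕ) :
    (j, k) ∈ (Imon.mk e he).graph ↔ j ∈ e.source ∧ e j = k := Iff.rfl

/-- The identity on `{n | i ≤ n}`. -/
private def idS (i : ℕ) : PartialEquiv ℕ ℕ := PartialEquiv.ofSet {n | i ≤ n}

private lemma idS_good (i : ℕ) : IsCMPB (idS i) := by
  refine ⟨?_, ?_, ?_⟩
  · apply (Set.finite_Iio i).subset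
    intro n hn
    simp only [idS, PartialEquiv.ofSet_source, mem_compl_iff, mem_setOf_eq, not_le] at hn
    exact hn
  · apply (Set.finite_Iio i).subset
    intro n hn
    simp only [idS, PartialEquiv.ofSet_target, mem_compl_iff, mem_setOf_eq, not_le] at hn
    exact hn
  · intro m n _ _ h
    exact h

private def epsI (i : ℕ) : Imon := Imon.mk (idS i) (idS_good i)

private lemma epsI_idem (i : ℕ) : epsI i * epsI i = epsI i := by
  rw [epsI, mk_mul_mk, mk_eq_mk]
  constructor
  · rw [PartialEquiv.trans_source]
    apply inter_eq_self_of_subset_left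
    intro x hx
    exact hx
  · intro x _
    rfl

private lemma epsI_mem (i : ℕ) : epsI (i + 1) ∈ Cbic := by
  induction i with
  | zero =>
      have h1 : epsI 1 = bGen * aGen := by
        rw [epsI, bGen, aGen]
        show Imon.mk (idS 1) (idS_good 1) =
          (Imon.mk alphaPE alphaPE_good)⁻¹ * Imon.mk alphaPE alphaPE_good
        rw [show (Imon.mk alphaPE alphaPE_good)⁻¹ =
              Imon.mk alphaPE.symm alphaPE_good.symm from rfl, mk_mul_mk, mk_eq_mk]
        symm
        refine ⟨?_, ?_⟩
        · have h2 : alphaPE.symm ⁻¹' alphaPE.source = univ := by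
            ext n
            constructor <;> intro _ <;> trivial
          rw [PartialEquiv.trans_source, PartialEquiv.symm_source, h2, inter_univ]
          rfl
        · intro x hx
          rw [PartialEquiv.trans_source, PartialEquiv.symm_source] at hx
          show alphaPE (alphaPE.symm x) = idS 1 x
          exact alphaPE.right_inv hx.1
      rw [h1]
      exact Subsemigroup.mul_mem _ (Subsemigroup.subset_closure (by simp))
        (Subsemigroup.subset_closure (by simp))
  | succ n ih =>
      have h1 : epsI (n + 2) = bGen * (epsI (n + 1) * aGen) := by
        rw [epsI, epsI, bGen, aGen]
        show Imon.mk (idS (n + 2)) (idS_good _) =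
          (Imon.mk alphaPE alphaPE_good)⁻¹ *
            (Imon.mk (idS (n + 1)) (idS_good _) * Imon.mk alphaPE alphaPE_good)
        rw [show (Imon.mk alphaPE alphaPE_good)⁻¹ =
              Imon.mk alphaPE.symm alphaPE_good.symm from rfl, mk_mul_mk, mk_mul_mk, mk_eq_mk]
        symm
        refine ⟨?_, ?_⟩
        · ext x
          rw [PartialEquiv.trans_source, PartialEquiv.symm_source]
          simp only [mem_inter_iff, mem_preimage, PartialEquiv.trans_source]
          constructor
          · rintro ⟨h1, h2, -⟩
            have h1' : 1 ≤ x := h1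
            have h2' : n + 1 ≤ x - 1 := h2
            show n + 2 ≤ x
            omega
          · intro hx
            have hx' : n + 2 ≤ x := hx
            refine ⟨?_, ?_, trivial⟩
            · show 1 ≤ x
              omega
            · show n + 1 ≤ x - 1
              omega
        · intro x hx
          rw [PartialEquiv.trans_source, PartialEquiv.symm_source] at hx
          have h1 : 1 ≤ x := hx.1
          show (x - 1) + 1 = x
          omega
      rw [h1]
      exact Subsemigroup.mul_mem _ (Subsemigroup.subset_closure (by simp))
        (Subsemigroup.mul_mem _ ih (Subsemigroup.subset_closure (by simp)))

private lemma bad_finite (g : PartialEquiv ℕ ℕ) {S : Set ℕ} (hS : Sᶜ.Finite) :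
    (g.source ∩ g ⁻¹' Sᶜ).Finite := by
  apply Set.Finite.of_finite_image ?_ (g.injOn.mono inter_subset_left)
  apply hS.subset
  rintro _ ⟨x, ⟨_, hx2⟩, rfl⟩
  exact hx2

private lemma idem_fix {e : PartialEquiv ℕ ℕ} (he : e.trans e ≈ e) {x : ℕ}
    (hx : x ∈ e.source) : e x = x := by
  have hs := PartialEquiv.EqOnSource.source_eq he
  rw [PartialEquiv.trans_source] at hs
  have hx2 : x ∈ e.source ∩ e ⁻¹' e.source := by
    have := hx
    rw [← hs] at this
    exact this
  have hmem : x ∈ (e.trans e).source := by rw [PartialEquiv.trans_source]; exact hx2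
  have h3 : e (e x) = e x := PartialEquiv.EqOnSource.eqOn he hmem
  exact e.injOn hx2.2 hx h3

private lemma left_key {e g d : PartialEquiv ℕ ℕ} (heq : e.trans g ≈ e.trans d)
    (hfix : ∀ x ∈ e.source, e x = x) {j k : ℕ} (hjs : j ∈ e.source)
    (h : j ∈ g.source ∧ g j = k) : j ∈ d.source ∧ d j = k := by
  obtain ⟨hjg, hk⟩ := h
  have hmem : j ∈ (e.trans g).source := by
    rw [PartialEquiv.trans_source]
    exact ⟨hjs, by rw [mem_preimage, hfix _ hjs]; exact hjg⟩
  have hmem' : j ∈ (e.trans d).source := by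
    rw [← PartialEquiv.EqOnSource.source_eq heq]; exact hmem
  rw [PartialEquiv.trans_source] at hmem'
  have hjd : j ∈ d.source := by
    have h2 := hmem'.2
    rwa [mem_preimage, hfix _ hjs] at h2
  have hval : g (e j) = d (e j) := PartialEquiv.EqOnSource.eqOn heq hmem
  rw [hfix _ hjs] at hval
  exact ⟨hjd, by rw [← hval]; exact hk⟩

private lemma right_key {e g d : PartialEquiv ℕ ℕ} (heq : g.trans e ≈ d.trans e)
    (hfix : ∀ x ∈ e.source, e x = x) {j k : ℕ}
    (hg : j ∈ g.source → g j ∈ e.source) (_hd : j ∈ d.source → d j ∈ e.source)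
    (h : j ∈ g.source ∧ g j = k) : j ∈ d.source ∧ d j = k := by
  obtain ⟨hjg, hk⟩ := h
  have hmem : j ∈ (g.trans e).source := by
    rw [PartialEquiv.trans_source]
    exact ⟨hjg, hg hjg⟩
  have hmem' : j ∈ (d.trans e).source := by
    rw [← PartialEquiv.EqOnSource.source_eq heq]; exact hmem
  rw [PartialEquiv.trans_source] at hmem'
  have hval : e (g j) = e (d j) := PartialEquiv.EqOnSource.eqOn heq hmem
  rw [hfix _ (hg hjg), hfix _ hmem'.2] at hval
  exact ⟨hmem'.1, by rw [← hval]; exact hk⟩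

private lemma five_to_left {g d : PartialEquiv ℕ ℕ} (i : ℕ)
    (H : ∀ j k, i ≤ j → ((j ∈ g.source ∧ g j = k) ↔ (j ∈ d.source ∧ d j = k))) :
    (idS i).trans g ≈ (idS i).trans d := by
  constructor
  · ext x
    rw [PartialEquiv.trans_source, PartialEquiv.trans_source]
    constructor
    · rintro ⟨hxi, hxg⟩
      have hxi' : i ≤ x := hxi
      have hxg' : x ∈ g.source := hxg
      exact ⟨hxi, ((H x (g x) hxi').mp ⟨hxg', rfl⟩).1⟩
    · rintro ⟨hxi, hxd⟩
      have hxi' : i ≤ x := hxi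
      have hxd' : x ∈ d.source := hxd
      exact ⟨hxi, ((H x (d x) hxi').mpr ⟨hxd', rfl⟩).1⟩
  · intro x hx
    rw [PartialEquiv.trans_source] at hx
    have hxi : i ≤ x := hx.1
    have hxg : x ∈ g.source := hx.2
    show g x = d x
    exact (((H x (g x) hxi).mp ⟨hxg, rfl⟩).2).symm

private lemma five_to_right {g d : PartialEquiv ℕ ℕ} (i m : ℕ)
    (hgm : ∀ x ∈ g.source, m ≤ g x → i ≤ x)
    (hdm : ∀ x ∈ d.source, m ≤ d x → i ≤ x)
    (H : ∀ j k, i ≤ j → ((j ∈ g.source ∧ g j = k) ↔ (j ∈ d.source ∧ d j = k))) :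
    g.trans (idS m) ≈ d.trans (idS m) := by
  constructor
  · ext x
    rw [PartialEquiv.trans_source, PartialEquiv.trans_source]
    constructor
    · rintro ⟨hxg, hgx⟩
      have hgx' : m ≤ g x := hgx
      have hxi : i ≤ x := hgm x hxg hgx'
      obtain ⟨hxd, hval⟩ := (H x (g x) hxi).mp ⟨hxg, rfl⟩
      exact ⟨hxd, show m ≤ d x by rw [hval]; exact hgx'⟩
    · rintro ⟨hxd, hdx⟩
      have hdx' : m ≤ d x := hdx
      have hxi : i ≤ x := hdm x hxd hdx'
      obtain ⟨hxg, hval⟩ := (H x (d x) hxi).mpr ⟨hxd, rfl⟩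
      exact ⟨hxg, show m ≤ g x by rw [hval]; exact hdx'⟩
  · intro x hx
    rw [PartialEquiv.trans_source] at hx
    have hgx' : m ≤ g x := hx.2
    have hxi : i ≤ x := hgm x hx.1 hgx'
    show g x = d x
    exact (((H x (g x) hxi).mp ⟨hx.1, rfl⟩).2).symm

end AuxLGC

/-- the conditions defining the least group congruence on `I∞↗(ℕ)` are
equivalent: right/left multiplication by an idempotent of `I∞↗(ℕ)` or of the bicyclic
subsemigroup `C = C_ℕ(α,β)` identifies `γ` and `δ`, iff `γ` and `δ` coincide on a final
segment `{i, i+1, i+2, …}` of `ℕ` (with `i > 0`). -/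
theorem Imon_least_group_congruence (γ δ : Imon) :
    List.TFAE
      [∃ ε : Imon, ε * ε = ε ∧ γ * ε = δ * ε,
       ∃ ε : Imon, ε * ε = ε ∧ ε * γ = ε * δ,
       ∃ ε ∈ Cbic, ε * ε = ε ∧ ε * γ = ε * δ,
       ∃ ε ∈ Cbic, ε * ε = ε ∧ γ * ε = δ * ε,
       ∃ i : ℕ, 0 < i ∧ ∀ j k : ℕ, i ≤ j → ((j, k) ∈ γ.graph ↔ (j, k) ∈ δ.graph)] := by
  induction γ using Imon.indOn with | h g hg => ?_
  induction δ using Imon.indOn with | h d hd => ?_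
  tfae_have 3 → 2 := fun ⟨ε, _, h⟩ => ⟨ε, h⟩
  tfae_have 4 → 1 := fun ⟨ε, _, h⟩ => ⟨ε, h⟩
  tfae_have 2 → 5 := by
    rintro ⟨ε, hidem, heq⟩
    induction ε using Imon.indOn with | h e he => ?_
    rw [mk_mul_mk, mk_eq_mk] at hidem
    rw [mk_mul_mk, mk_mul_mk, mk_eq_mk] at heq
    obtain ⟨b, hb⟩ := he.1.bddAbove
    refine ⟨b + 1, Nat.succ_pos b, fun j k hj => ?_⟩
    have hjs : j ∈ e.source := by
      by_contra hns
      have := hb hns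
      omega
    have hfix : ∀ x ∈ e.source, e x = x := fun x hx => idem_fix hidem hx
    rw [mem_graph_mk, mem_graph_mk]
    exact ⟨left_key heq hfix hjs, left_key (Setoid.symm heq) hfix hjs⟩
  tfae_have 1 → 5 := by
    rintro ⟨ε, hidem, heq⟩
    induction ε using Imon.indOn with | h e he => ?_
    rw [mk_mul_mk, mk_eq_mk] at hidem
    rw [mk_mul_mk, mk_mul_mk, mk_eq_mk] at heq
    have hfix : ∀ x ∈ e.source, e x = x := fun x hx => idem_fix hidem hx
    have hBg := bad_finite g he.1
    have hBd := bad_finite d he.1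
    obtain ⟨b, hb⟩ := (hBg.union hBd).bddAbove
    refine ⟨b + 1, Nat.succ_pos b, fun j k hj => ?_⟩
    have hge : j ∈ g.source → g j ∈ e.source := by
      intro hjg
      by_contra hns
      have hmem : j ∈ (g.source ∩ g ⁻¹' e.sourceᶜ) ∪ (d.source ∩ d ⁻¹' e.sourceᶜ) :=
        Or.inl ⟨hjg, hns⟩
      have := hb hmem
      omega
    have hde : j ∈ d.source → d j ∈ e.source := by
      intro hjd
      by_contra hns
      have hmem : j ∈ (g.source ∩ g ⁻¹' e.sourceᶜ) ∪ (d.source ∩ d ⁻¹' e.sourceᶜ) :=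
        Or.inr ⟨hjd, hns⟩
      have := hb hmem
      omega
    rw [mem_graph_mk, mem_graph_mk]
    exact ⟨right_key heq hfix hge hde, right_key (Setoid.symm heq) hfix hde hge⟩
  tfae_have 5 → 3 := by
    rintro ⟨i, hi, H⟩
    obtain ⟨i', rfl⟩ : ∃ i', i = i' + 1 := ⟨i - 1, by omega⟩
    refine ⟨epsI (i' + 1), epsI_mem i', epsI_idem _, ?_⟩
    rw [epsI, mk_mul_mk, mk_mul_mk, mk_eq_mk]
    exact five_to_left (i' + 1) (fun j k hj => by
      have h := H j k hj
      rwa [mem_graph_mk, mem_graph_mk] at h)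
  tfae_have 5 → 4 := by
    rintro ⟨i, hi, H⟩
    have H' : ∀ j k, i ≤ j → ((j ∈ g.source ∧ g j = k) ↔ (j ∈ d.source ∧ d j = k)) := by
      intro j k hj
      have h := H j k hj
      rwa [mem_graph_mk, mem_graph_mk] at h
    have hfin : ((g '' (g.source ∩ {x | x < i})) ∪ (d '' (d.source ∩ {x | x < i}))).Finite :=
      Set.Finite.union
        (Set.Finite.image _ ((Set.finite_Iio i).subset inter_subset_right))
        (Set.Finite.image _ ((Set.finite_Iio i).subset inter_subset_right))
    obtain ⟨b, hb⟩ := hfin.bddAbove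
    refine ⟨epsI (b + 1), epsI_mem b, epsI_idem _, ?_⟩
    rw [epsI, mk_mul_mk, mk_mul_mk, mk_eq_mk]
    apply five_to_right i (b + 1) ?_ ?_ H'
    · intro x hx hmx
      by_contra hlt
      have hmem : g x ∈ (g '' (g.source ∩ {x | x < i})) ∪ (d '' (d.source ∩ {x | x < i})) :=
        Or.inl ⟨x, ⟨hx, show x < i by omega⟩, rfl⟩
      have := hb hmem
      omega
    · intro x hx hmx
      by_contra hlt
      have hmem : d x ∈ (g '' (g.source ∩ {x | x < i})) ∪ (d '' (d.source ∩ {x | x < i})) :=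
        Or.inr ⟨x, ⟨hx, show x < i by omega⟩, rfl⟩
      have := hb hmem
      omega
  tfae_finish
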